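/- Let a, b, x be unit quaternions with ⟪x, a⟫ = 0 and ⟪x, b⟫ = 0. Then re(a⁻¹·x) = 0, re(b⁻¹·x) = 0, ⟪a⁻¹·x, a⁻¹·b⟫ = 0 and ⟪b⁻¹·x, a⁻¹·b⟫ = 0; that is, both a⁻¹x and b⁻¹x lie on the great circle e* ∩ (a⁻¹b)*, so that the left projections of the edge E = a* ∩ b* from its two sides land on a common great circle of the sphere e*. -/

import Mathlib

open scoped Quaternion RealInnerProductSpace

open Quaternion in
/-- If `x` lies on the edge `E = a* ∩ b*`, then the two left projections `a⁻¹x`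
and `b⁻¹x` both lie on the great circle `e* ∩ (a⁻¹b)*`. -/
theorem stmt_4 (a b x : ℍ[ℝ]) (ha : ‖a‖ = 1) (hb : ‖b‖ = 1) (hx : ‖x‖ = 1)
    (h1 : ⟪x, a⟫ = 0) (h2 : ⟪x, b⟫ = 0) :
    (a⁻¹ * x).re = 0 ∧ (b⁻¹ * x).re = 0 ∧
      ⟪a⁻¹ * x, a⁻¹ * b⟫ = 0 ∧ ⟪b⁻¹ * x, a⁻¹ * b⟫ = 0 := by
  have han : normSq a = 1 := by rw [normSq_eq_norm_mul_self, ha, mul_one]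
  have hbn : normSq b = 1 := by rw [normSq_eq_norm_mul_self, hb, mul_one]
  have ha' : a⁻¹ = star a := by rw [inv_def, han, inv_one, one_smul]
  have hb' : b⁻¹ = star b := by rw [inv_def, hbn, inv_one, one_smul]
  simp only [Quaternion.inner_def, re_mul, re_star, imI_star, imJ_star, imK_star] at h1 h2
  rw [normSq_def'] at han hbn
  rw [ha', hb']
  simp only [Quaternion.inner_def, re_mul, imI_mul, imJ_mul, imK_mul,
    re_star, imI_star, imJ_star, imK_star]
  refine ⟨by linear_combination h1, by linear_combination h2, ?_, ?_⟩
  · linear_combination (a.re^2 + a.imI^2 + a.imJ^2 + a.imK^2) * h2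
  · linear_combination
      (2*(a.re*b.re + a.imI*b.imI + a.imJ*b.imJ + a.imK*b.imK)) * h2
        - (b.re^2 + b.imI^2 + b.imJ^2 + b.imK^2) * h1
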